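/- arXiv:2109.14741 — 3 statements merged into one kernel-verified Lean document; each statement's English description precedes it below -/
import Mathlib

section
/- For the n-fold parallel repetition of the game in Example 6.1, the synchronous classical value equals 1 − 1/2ⁿ: the optimal synchronous deterministic strategy f : {0,1}ⁿ → {0,1}ⁿ given by f(1ⁿ) = 1ⁿ and f(x) = x̄ (bitwise complement) for x ≠ 1ⁿ achieves value 1 − 1/2ⁿ, and no synchronous strategy can exceed 1 − 1/2ⁿ. -/
/-- Synchronous classical value of the n-fold repetition equals 1 − 1/2ⁿ. -/
theorem stmt8 (n : ℕ) (hn : 0 < n)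
    (val : ((Fin n → Bool) → (Fin n → Bool)) → ℝ)
    (hval : ∀ f, val f =
      ((Finset.univ.filter (fun x : Fin n → Bool =>
          ∀ i, (x i = false → f x i = true ∧ f (fun _ => true) i = true) ∧
               (x i = true → f x i = false ∧ f (fun _ => true) i = true))).card : ℝ)
        / 2 ^ n) :
    IsGreatest {v | ∃ f, v = val f} (1 - 1 / 2 ^ n) ∧
    val (fun x => if x = (fun _ => true) then (fun _ => true) else (fun i => !x i))
      = 1 - 1 / 2 ^ n := by
  have hcard : Fintype.card (Fin n → Bool) = 2 ^ n := by simp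
  have h2 : (0:ℝ) < 2 ^ n := by positivity
  set g : (Fin n → Bool) → (Fin n → Bool) :=
    (fun x => if x = (fun _ => true) then (fun _ => true) else (fun i => !x i)) with hg
  -- value of the optimal strategy
  have hgval : val g = 1 - 1 / 2 ^ n := by
    rw [hval]
    have hset : (Finset.univ.filter (fun x : Fin n → Bool =>
          ∀ i, (x i = false → g x i = true ∧ g (fun _ => true) i = true) ∧
               (x i = true → g x i = false ∧ g (fun _ => true) i = true)))
        = Finset.univ.erase (fun _ => true) := by
      ext x
      simp only [Finset.mem_filter, Finset.mem_univ, true_and, Finset.mem_erase, and_true]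
      constructor
      · intro h hx
        have := (h ⟨0, hn⟩).2 (by rw [hx])
        rw [hg] at this
        simp [hx] at this
      · intro hx i
        have hfx : g x = fun i => !x i := by rw [hg]; simp [hx]
        have hf1 : g (fun _ => true) = fun _ => true := by rw [hg]; simp
        rw [hfx, hf1]
        constructor <;> intro h <;> simp [h]
    rw [hset]
    rw [Finset.card_erase_of_mem (Finset.mem_univ _)]
    rw [Finset.card_univ, hcard]
    have : (1:ℕ) ≤ 2 ^ n := Nat.one_le_two_pow
    rw [Nat.cast_sub this]
    push_cast
    field_simp
  refine ⟨⟨⟨g, hgval.symm⟩, ?_⟩, hgval⟩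
  rintro v ⟨f, rfl⟩
  rw [hval]
  have hsub : (Finset.univ.filter (fun x : Fin n → Bool =>
          ∀ i, (x i = false → f x i = true ∧ f (fun _ => true) i = true) ∧
               (x i = true → f x i = false ∧ f (fun _ => true) i = true)))
      ⊆ Finset.univ.erase (fun _ => true) := by
    intro x hx
    simp only [Finset.mem_filter, Finset.mem_univ, true_and] at hx
    simp only [Finset.mem_erase, Finset.mem_univ, and_true]
    intro hxeq
    have h1 := (hx ⟨0, hn⟩).2 (by rw [hxeq])
    -- f 1ⁿ i must be both false and true
    rw [hxeq] at h1
    exact absurd h1.2 (by rw [h1.1]; simp)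
  have hle : ((Finset.univ.filter (fun x : Fin n → Bool =>
          ∀ i, (x i = false → f x i = true ∧ f (fun _ => true) i = true) ∧
               (x i = true → f x i = false ∧ f (fun _ => true) i = true))).card : ℝ)
      ≤ (2 ^ n - 1 : ℝ) := by
    have := Finset.card_le_card hsub
    rw [Finset.card_erase_of_mem (Finset.mem_univ _), Finset.card_univ, hcard] at this
    calc ((Finset.univ.filter _).card : ℝ) ≤ ((2 ^ n - 1 : ℕ) : ℝ) := by exact_mod_cast this
      _ = (2 ^ n - 1 : ℝ) := by
          rw [Nat.cast_sub Nat.one_le_two_pow]; push_cast; ring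
  rw [div_le_iff₀ h2]
  calc _ ≤ (2 ^ n - 1 : ℝ) := hle
    _ = (1 - 1 / 2 ^ n) * 2 ^ n := by field_simp
end

section
/- If A₁ ∈ M_m(ℝ) and A₂ ∈ M_n(ℝ) are symmetric matrices and y₁ ∈ ℝ^m, y₂ ∈ ℝ^n have strictly positive entries with −Diag(y₁) ≤ A₁ ≤ Diag(y₁) and −Diag(y₂) ≤ A₂ ≤ Diag(y₂) (in the positive semidefinite order), then −Diag(y₁)⊗Diag(y₂) ≤ A₁⊗A₂ ≤ Diag(y₁)⊗Diag(y₂). -/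
open Matrix Kronecker

lemma psd_smul {k : Type*} [Fintype k] {M : Matrix k k ℝ} {c : ℝ} (hc : 0 ≤ c)
    (hM : M.PosSemidef) : (c • M).PosSemidef := by
  constructor
  · have h := hM.1
    rw [Matrix.IsHermitian] at h ⊢
    rw [Matrix.conjTranspose_smul, h, star_trivial]
  · exact (hM.smul hc).2

lemma psd_kron {m n : ℕ} {A : Matrix (Fin m) (Fin m) ℝ} {B : Matrix (Fin n) (Fin n) ℝ}
    (hA : A.PosSemidef) (hB : B.PosSemidef) : (A ⊗ₖ B).PosSemidef := by
  exact hA.kronecker hB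

open Kronecker in
/-- Kronecker product preserves the sandwich −Diag(y) ≤ A ≤ Diag(y). -/
theorem stmt10 (m n : ℕ)
    (A₁ : Matrix (Fin m) (Fin m) ℝ) (A₂ : Matrix (Fin n) (Fin n) ℝ)
    (y₁ : Fin m → ℝ) (y₂ : Fin n → ℝ)
    (hA₁ : A₁.IsSymm) (hA₂ : A₂.IsSymm)
    (hy₁ : ∀ i, 0 < y₁ i) (hy₂ : ∀ i, 0 < y₂ i)
    (h₁u : (Matrix.diagonal y₁ - A₁).PosSemidef)
    (h₁l : (A₁ + Matrix.diagonal y₁).PosSemidef)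
    (h₂u : (Matrix.diagonal y₂ - A₂).PosSemidef)
    (h₂l : (A₂ + Matrix.diagonal y₂).PosSemidef) :
    ((Matrix.diagonal y₁ ⊗ₖ Matrix.diagonal y₂) - A₁ ⊗ₖ A₂).PosSemidef ∧
    (A₁ ⊗ₖ A₂ + Matrix.diagonal y₁ ⊗ₖ Matrix.diagonal y₂).PosSemidef := by
  have h1 := psd_kron h₁u h₂l
  have h2 := psd_kron h₁l h₂u
  have h3 := psd_kron h₁u h₂u
  have h4 := psd_kron h₁l h₂l
  set D₁ := Matrix.diagonal y₁
  set D₂ := Matrix.diagonal y₂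
  have e1 : D₁ ⊗ₖ D₂ - A₁ ⊗ₖ A₂ =
      (2⁻¹ : ℝ) • ((D₁ - A₁) ⊗ₖ (A₂ + D₂) + (A₁ + D₁) ⊗ₖ (D₂ - A₂)) := by
    ext ⟨i,j⟩ ⟨k,l⟩
    simp [Matrix.kroneckerMap, Matrix.add_apply, Matrix.sub_apply, Matrix.smul_apply]
    ring
  have e2 : A₁ ⊗ₖ A₂ + D₁ ⊗ₖ D₂ =
      (2⁻¹ : ℝ) • ((D₁ - A₁) ⊗ₖ (D₂ - A₂) + (A₁ + D₁) ⊗ₖ (A₂ + D₂)) := by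
    ext ⟨i,j⟩ ⟨k,l⟩
    simp [Matrix.kroneckerMap, Matrix.add_apply, Matrix.sub_apply, Matrix.smul_apply]
    ring
  constructor
  · rw [e1]; exact (psd_smul (c := 2⁻¹) (by norm_num) (h1.add h2))
  · rw [e2]; exact (psd_smul (c := 2⁻¹) (by norm_num) (h3.add h4))
end

section
/- For the matrix A ∈ M₃(ℝ) with diagonal entries 1/21 and off-diagonal entries −3/21, the maximum of Tr((A⊗A)W) over 9×9 real PSD matrices W with unit diagonal equals (5/7)², which strictly exceeds (4/7)², the square of max{Tr(AP) : P ∈ E₃}. -/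
open Matrix in
lemma psd_diag_nonneg' {n : Type*} [Fintype n] [DecidableEq n] {M : Matrix n n ℝ}
    (hM : M.PosSemidef) (i : n) : 0 ≤ M i i := by
  have := hM.dotProduct_mulVec_nonneg (Pi.single i 1)
  simpa [dotProduct, Matrix.mulVec, Pi.single_apply] using this

open Matrix in
lemma psd_trace_mul_nonneg' {n : Type*} [Fintype n] [DecidableEq n] {M W : Matrix n n ℝ}
    (hM : M.PosSemidef) (hW : W.PosSemidef) : 0 ≤ (M * W).trace := by
  obtain ⟨B, rfl⟩ : ∃ B : Matrix n n ℝ, W = Bᴴ * B := by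
    open scoped MatrixOrder in
    obtain ⟨B, hB⟩ := CStarAlgebra.nonneg_iff_eq_star_mul_self.mp hW.nonneg
    exact ⟨B, hB⟩
  rw [← mul_assoc, Matrix.trace_mul_cycle]
  have h := hM.mul_mul_conjTranspose_same B
  have h2 : (B * M * Bᴴ).trace = ∑ i, (B * M * Bᴴ) i i := rfl
  rw [h2]
  exact Finset.sum_nonneg fun i _ => psd_diag_nonneg' h i

set_option maxHeartbeats 2000000 in
open Kronecker in
/-- The bias is not multiplicative: the SDP value for A ⊗ A is (5/7)² > (4/7)². -/
theorem stmt12 (A : Matrix (Fin 3) (Fin 3) ℝ)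
    (hA : ∀ i j, A i j = if i = j then 1/21 else -3/21) :
    IsGreatest {t | ∃ W : Matrix (Fin 3 × Fin 3) (Fin 3 × Fin 3) ℝ,
        W.PosSemidef ∧ (∀ i, W i i = 1) ∧ t = Matrix.trace ((A ⊗ₖ A) * W)}
      ((5/7 : ℝ)^2) ∧
    ((4/7 : ℝ)^2 < (5/7 : ℝ)^2) ∧
    IsGreatest {t | ∃ Q : Matrix (Fin 3) (Fin 3) ℝ,
        Q.PosSemidef ∧ (∀ i, Q i i = 1) ∧ t = Matrix.trace (A * Q)} ((4/7 : ℝ)) := by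
  open Matrix in
  refine ⟨⟨?_, ?_⟩, by norm_num, ⟨?_, ?_⟩⟩
  · -- membership for the big SDP: W = all-ones matrix
    refine ⟨Matrix.of fun _ _ => (1:ℝ), .of_dotProduct_mulVec_nonneg ?_ ?_, fun i => rfl, ?_⟩
    · ext i j; simp [Matrix.conjTranspose_apply]
    · intro x
      have h : (star x ⬝ᵥ (Matrix.of fun _ _ => (1:ℝ)) *ᵥ x) =
          (∑ p : Fin 3 × Fin 3, x p)^2 := by
        simp [dotProduct, Matrix.mulVec, Finset.mul_sum]
        rw [sq, Finset.sum_mul]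
        congr 1; ext p; rw [Finset.mul_sum]
      rw [h]; positivity
    · simp only [Matrix.trace, Matrix.diag, Matrix.mul_apply, Matrix.kroneckerMap_apply,
        Matrix.of_apply, mul_one, Fintype.sum_prod_type, Fin.sum_univ_three, hA, Fin.ext_iff]
      norm_num
  · -- upper bound for the big SDP via the dual certificate N
    rintro t ⟨W, hW, hdiag, rfl⟩
    set N : Matrix (Fin 3 × Fin 3) (Fin 3 × Fin 3) ℝ :=
      (25/441 : ℝ) • (1 : Matrix (Fin 3 × Fin 3) (Fin 3 × Fin 3) ℝ) - A ⊗ₖ A with hN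
    have hNpsd : N.PosSemidef := by
      refine .of_dotProduct_mulVec_nonneg ?_ ?_
      · have hsym : ∀ i j, A i j = A j i := by
          intro i j; simp only [hA]; rcases eq_or_ne i j with h | h
          · simp [h]
          · simp [h, Ne.symm h]
        ext ⟨i, j⟩ ⟨k, l⟩
        simp only [hN, Matrix.conjTranspose_apply, Matrix.sub_apply, Matrix.smul_apply,
          Matrix.one_apply, Matrix.kroneckerMap_apply, star_trivial, Prod.mk.injEq]
        rw [hsym k i, hsym l j]
        congr 1
        simp [eq_comm, and_comm]
      · intro x
        have hexp : (star x ⬝ᵥ N *ᵥ x) =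
            ∑ p : Fin 3 × Fin 3, ∑ q : Fin 3 × Fin 3, x p * N p q * x q := by
          simp [dotProduct, Matrix.mulVec, Finset.mul_sum, mul_assoc]
        rw [hexp]
        simp only [hN, Matrix.sub_apply, Matrix.smul_apply, Matrix.one_apply,
          Matrix.kroneckerMap_apply, Fintype.sum_prod_type, Fin.sum_univ_three, hA,
          Prod.mk.injEq, smul_eq_mul, Fin.ext_iff]
        norm_num
        simp only [Prod.mk_zero_zero, Prod.mk_one_one]
        linarith [sq_nonneg (9*(x 0) - 3*((x 0)+x (0,1)+x (0,2)) - 3*((x 0)+x (1,0)+x (2,0)) + ((x 0)+x (0,1)+x (0,2)+x (1,0)+(x 1)+x (1,2)+x (2,0)+x (2,1)+x (2,2))),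
          sq_nonneg (9*x (0,1) - 3*((x 0)+x (0,1)+x (0,2)) - 3*(x (0,1)+(x 1)+x (2,1)) + ((x 0)+x (0,1)+x (0,2)+x (1,0)+(x 1)+x (1,2)+x (2,0)+x (2,1)+x (2,2))),
          sq_nonneg (9*x (0,2) - 3*((x 0)+x (0,1)+x (0,2)) - 3*(x (0,2)+x (1,2)+x (2,2)) + ((x 0)+x (0,1)+x (0,2)+x (1,0)+(x 1)+x (1,2)+x (2,0)+x (2,1)+x (2,2))),
          sq_nonneg (9*x (1,0) - 3*(x (1,0)+(x 1)+x (1,2)) - 3*((x 0)+x (1,0)+x (2,0)) + ((x 0)+x (0,1)+x (0,2)+x (1,0)+(x 1)+x (1,2)+x (2,0)+x (2,1)+x (2,2))),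
          sq_nonneg (9*(x 1) - 3*(x (1,0)+(x 1)+x (1,2)) - 3*(x (0,1)+(x 1)+x (2,1)) + ((x 0)+x (0,1)+x (0,2)+x (1,0)+(x 1)+x (1,2)+x (2,0)+x (2,1)+x (2,2))),
          sq_nonneg (9*x (1,2) - 3*(x (1,0)+(x 1)+x (1,2)) - 3*(x (0,2)+x (1,2)+x (2,2)) + ((x 0)+x (0,1)+x (0,2)+x (1,0)+(x 1)+x (1,2)+x (2,0)+x (2,1)+x (2,2))),
          sq_nonneg (9*x (2,0) - 3*(x (2,0)+x (2,1)+x (2,2)) - 3*((x 0)+x (1,0)+x (2,0)) + ((x 0)+x (0,1)+x (0,2)+x (1,0)+(x 1)+x (1,2)+x (2,0)+x (2,1)+x (2,2))),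
          sq_nonneg (9*x (2,1) - 3*(x (2,0)+x (2,1)+x (2,2)) - 3*(x (0,1)+(x 1)+x (2,1)) + ((x 0)+x (0,1)+x (0,2)+x (1,0)+(x 1)+x (1,2)+x (2,0)+x (2,1)+x (2,2))),
          sq_nonneg (9*x (2,2) - 3*(x (2,0)+x (2,1)+x (2,2)) - 3*(x (0,2)+x (1,2)+x (2,2)) + ((x 0)+x (0,1)+x (0,2)+x (1,0)+(x 1)+x (1,2)+x (2,0)+x (2,1)+x (2,2))),
          sq_nonneg (3*((x 0)+x (0,1)+x (0,2)) - ((x 0)+x (0,1)+x (0,2)+x (1,0)+(x 1)+x (1,2)+x (2,0)+x (2,1)+x (2,2))),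
          sq_nonneg (3*(x (1,0)+(x 1)+x (1,2)) - ((x 0)+x (0,1)+x (0,2)+x (1,0)+(x 1)+x (1,2)+x (2,0)+x (2,1)+x (2,2))),
          sq_nonneg (3*(x (2,0)+x (2,1)+x (2,2)) - ((x 0)+x (0,1)+x (0,2)+x (1,0)+(x 1)+x (1,2)+x (2,0)+x (2,1)+x (2,2))),
          sq_nonneg (3*((x 0)+x (1,0)+x (2,0)) - ((x 0)+x (0,1)+x (0,2)+x (1,0)+(x 1)+x (1,2)+x (2,0)+x (2,1)+x (2,2))),
          sq_nonneg (3*(x (0,1)+(x 1)+x (2,1)) - ((x 0)+x (0,1)+x (0,2)+x (1,0)+(x 1)+x (1,2)+x (2,0)+x (2,1)+x (2,2))),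
          sq_nonneg (3*(x (0,2)+x (1,2)+x (2,2)) - ((x 0)+x (0,1)+x (0,2)+x (1,0)+(x 1)+x (1,2)+x (2,0)+x (2,1)+x (2,2)))]
    have htr : Matrix.trace ((A ⊗ₖ A) * W) = 25/49 - (N * W).trace := by
      have h1 : N * W = (25/441 : ℝ) • W - (A ⊗ₖ A) * W := by
        rw [hN, Matrix.sub_mul, Matrix.smul_mul, one_mul]
      rw [h1, Matrix.trace_sub, Matrix.trace_smul]
      have h2 : W.trace = 9 := by
        have h3 : W.trace = ∑ p : Fin 3 × Fin 3, W p p := rfl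
        rw [h3]; simp [hdiag]
      rw [h2]
      norm_num
    have hnn := psd_trace_mul_nonneg' hNpsd hW
    rw [htr]
    norm_num
    linarith
  · -- membership for the small SDP
    refine ⟨Matrix.of fun i j => if i = j then (1:ℝ) else -(1/2), .of_dotProduct_mulVec_nonneg ?_ ?_, ?_, ?_⟩
    · ext i j
      simp [Matrix.conjTranspose_apply, eq_comm]
    · intro x
      have h : (star x ⬝ᵥ (Matrix.of fun i j => if i = j then (1:ℝ) else -(1/2)) *ᵥ x) =
          x 0 * (x 0 - x 1/2 - x 2/2) + x 1 * (-(x 0/2) + x 1 - x 2/2)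
            + x 2 * (-(x 0/2) - x 1/2 + x 2) := by
        simp [dotProduct, Matrix.mulVec, Fin.sum_univ_three]
        ring
      rw [h]
      nlinarith [sq_nonneg (x 0 - x 1), sq_nonneg (x 1 - x 2), sq_nonneg (x 0 - x 2)]
    · intro i; fin_cases i <;> simp
    · simp [Matrix.trace, Matrix.mul_apply, Fin.sum_univ_three, hA, Matrix.diag]
      norm_num
  · -- upper bound for the small SDP
    rintro t ⟨Q, hQ, hdiag, rfl⟩
    have he := hQ.dotProduct_mulVec_nonneg (fun _ => 1)
    simp only [dotProduct, Matrix.mulVec, star_trivial, Fin.sum_univ_three,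
      mul_one, one_mul, Pi.star_apply, star_one] at he
    have ht : Matrix.trace (A * Q) = 1/7 - (1/7) * (Q 0 1 + Q 0 2 + Q 1 0 + Q 1 2 + Q 2 0 + Q 2 1) := by
      simp [Matrix.trace, Matrix.mul_apply, Fin.sum_univ_three, hA, Matrix.diag,
        hdiag 0, hdiag 1, hdiag 2]
      ring
    rw [ht]
    rw [hdiag 0, hdiag 1, hdiag 2] at he
    linarith
end
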